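/- Under the stated assumptions, if 0 < h < min{ b(l_{2ε}) − b(l_ε), b(r_ε) − b(r_{2ε}) }, then sup_{w ∈ b(I_ε)} |𝔟_h⁻¹(w) − b⁻¹(w)| ≤ h · ‖(b⁻¹)'‖_{∞, b(I_{2ε})} · ∫_{−∞}^{∞} |y| K(y) dy. In particular the left-hand side is at most (h/m_b) ∫ |y| K(y) dy. -/

import Mathlib

open MeasureTheory

/-- The rescaled kernel `K_η(x) = η⁻¹ K(x/η)`. -/
noncomputable def Kh (K : ℝ → ℝ) (η x : ℝ) : ℝ := η⁻¹ * K (x / η)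

/-- The (deterministic) approximation
`𝔟_h⁻¹(w) = l₀ - 2ε + ∫_{I_{2ε}} ∫_{-∞}^{-w} K_h(-b(z) - y) dy dz` of `b⁻¹`. -/
noncomputable def binvApprox (K : ℝ → ℝ) (l₀ r₀ ε h : ℝ) (b : ℝ → ℝ) (w : ℝ) : ℝ :=
  (l₀ - 2 * ε) +
    ∫ z in Set.Icc (l₀ - 2 * ε) (r₀ + 2 * ε), ∫ y in Set.Iic (-w), Kh K h (-(b z) - y)

/-- Lemma 5.1: uniform bound on `b(I_ε)` for `𝔟_h⁻¹ - b⁻¹`. -/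
theorem stmt5 (l₀ r₀ ε mb : ℝ) (K b b' binv binv' : ℝ → ℝ)
    (hlr : l₀ < r₀) (hε : 0 < ε) (hε1 : ε ≤ 1) (hmb : 0 < mb)
    -- kernel assumptions
    (hK0 : ∀ y, 0 ≤ K y) (hK2 : ContDiff ℝ 2 K) (hKsymm : ∀ y, K (-y) = K y)
    (hKsupp : ∀ y, 1 < |y| → K y = 0) (hKint : ∫ y, K y = 1)
    -- `b` is continuously differentiable on `I_{2ε}` with `b' ≤ -mb` there
    (hbd : ∀ x ∈ Set.Icc (l₀ - 2 * ε) (r₀ + 2 * ε), HasDerivAt b (b' x) x)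
    (hb'c : ContinuousOn b' (Set.Icc (l₀ - 2 * ε) (r₀ + 2 * ε)))
    (hb'le : ∀ x ∈ Set.Icc (l₀ - 2 * ε) (r₀ + 2 * ε), b' x ≤ -mb)
    -- `binv` is the inverse of `b`, differentiable on `b(I_{2ε})` with derivative `binv'`
    (hbinv : ∀ x ∈ Set.Icc (l₀ - 2 * ε) (r₀ + 2 * ε), binv (b x) = x)
    (hbinvmem : ∀ w ∈ Set.Icc (b (r₀ + 2 * ε)) (b (l₀ - 2 * ε)),
      binv w ∈ Set.Icc (l₀ - 2 * ε) (r₀ + 2 * ε) ∧ b (binv w) = w)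
    (hbinvd : ∀ w ∈ Set.Icc (b (r₀ + 2 * ε)) (b (l₀ - 2 * ε)), HasDerivAt binv (binv' w) w)
    -- the bandwidth condition
    (h : ℝ) (hh0 : 0 < h)
    (hh : h < min (b (l₀ - 2 * ε) - b (l₀ - ε)) (b (r₀ + ε) - b (r₀ + 2 * ε))) :
    (∀ w ∈ Set.Icc (b (r₀ + ε)) (b (l₀ - ε)),
      |binvApprox K l₀ r₀ ε h b w - binv w| ≤
        h * (⨆ v ∈ Set.Icc (b (r₀ + 2 * ε)) (b (l₀ - 2 * ε)), |binv' v|) *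
          ∫ y, |y| * K y) ∧
    (∀ w ∈ Set.Icc (b (r₀ + ε)) (b (l₀ - ε)),
      |binvApprox K l₀ r₀ ε h b w - binv w| ≤ (h / mb) * ∫ y, |y| * K y) := by
  classical
  set l : ℝ := l₀ - 2 * ε with hl_def
  set r : ℝ := r₀ + 2 * ε with hr_def
  have hlr2 : l < r := by rw [hl_def, hr_def]; linarith
  have hKcont : Continuous K := hK2.continuous
  have hKsupp' : ∀ y : ℝ, y ∉ Set.Icc (-1:ℝ) 1 → K y = 0 := by
    intro y hy
    apply hKsupp
    rcases lt_or_ge y (-1) with h1 | h1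
    · rw [abs_of_neg (by linarith)]; linarith
    · have h2 : 1 < y := by
        by_contra h2
        exact hy ⟨h1, le_of_not_gt h2⟩
      rw [abs_of_pos (by linarith)]; exact h2
  have hKcs : HasCompactSupport K := HasCompactSupport.intro isCompact_Icc hKsupp'
  have hKi : Integrable K := hKcont.integrable_of_hasCompactSupport hKcs
  have hIccK : ∫ y in Set.Icc (-1:ℝ) 1, K y = 1 := by
    rw [setIntegral_eq_integral_of_forall_compl_eq_zero hKsupp', hKint]
  have hyKcont : Continuous (fun y : ℝ => |y| * K y) := continuous_abs.mul hKcont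
  have hyKcs : HasCompactSupport (fun y : ℝ => |y| * K y) :=
    HasCompactSupport.intro isCompact_Icc (fun y hy => by rw [hKsupp' y hy, mul_zero])
  have hyKi : Integrable (fun y : ℝ => |y| * K y) :=
    hyKcont.integrable_of_hasCompactSupport hyKcs
  have hyKint : ∫ y in Set.Icc (-1:ℝ) 1, |y| * K y = ∫ y, |y| * K y :=
    setIntegral_eq_integral_of_forall_compl_eq_zero
      (fun y hy => by rw [hKsupp' y hy, mul_zero])
  have hInn : 0 ≤ ∫ y, |y| * K y :=
    integral_nonneg fun y => mul_nonneg (abs_nonneg y) (hK0 y)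
  -- facts about b
  have hs : MeasurableSet (Set.Icc l r) := measurableSet_Icc
  have hbcont : ContinuousOn b (Set.Icc l r) := fun x hx =>
    (hbd x hx).continuousAt.continuousWithinAt
  have hanti : StrictAntiOn b (Set.Icc l r) := by
    apply strictAntiOn_of_deriv_neg (convex_Icc l r) hbcont
    intro x hx
    rw [interior_Icc] at hx
    rw [(hbd x (Set.mem_Icc_of_Ioo hx)).deriv]
    have := hb'le x (Set.mem_Icc_of_Ioo hx)
    linarith
  have hbrl : b r < b l :=
    hanti ⟨le_rfl, hlr2.le⟩ ⟨hlr2.le, le_rfl⟩ hlr2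
  -- inner integral identity
  have inner_eq : ∀ z w' : ℝ, (∫ y in Set.Iic (-w'), Kh K h (-(b z) - y)) =
      ∫ x in Set.Ici ((w' - b z) / h), K x := by
    intro z w'
    have hmp : MeasurePreserving (fun y : ℝ => -(b z) - y) volume volume :=
      Measure.measurePreserving_sub_left volume (-(b z))
    have hemb : MeasurableEmbedding (fun y : ℝ => -(b z) - y) :=
      (MeasurableEquiv.subLeft (-(b z))).measurableEmbedding
    have key := hmp.setIntegral_image_emb hemb (Kh K h) (Set.Iic (-w'))
    rw [Set.image_const_sub_Iic] at key
    have harg : -(b z) - -w' = w' - b z := by ring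
    rw [harg] at key
    calc (∫ y in Set.Iic (-w'), Kh K h (-(b z) - y))
        = ∫ x in Set.Ici (w' - b z), Kh K h x := key.symm
      _ = ∫ x in Set.Ioi (w' - b z), Kh K h x := integral_Ici_eq_integral_Ioi
      _ = h⁻¹ * ∫ x in Set.Ioi (w' - b z), K (h⁻¹ * x) := by
          simp only [Kh, div_eq_inv_mul]
          rw [integral_const_mul]
      _ = h⁻¹ * ((h⁻¹)⁻¹ • ∫ x in Set.Ioi (h⁻¹ * (w' - b z)), K x) := by
          rw [integral_comp_mul_left_Ioi K _ (inv_pos.2 hh0)]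
      _ = ∫ x in Set.Ioi ((w' - b z) / h), K x := by
          rw [inv_inv, smul_eq_mul, ← mul_assoc, inv_mul_cancel₀ hh0.ne', one_mul,
            div_eq_inv_mul]
      _ = ∫ x in Set.Ici ((w' - b z) / h), K x := integral_Ici_eq_integral_Ioi.symm
  -- indicator form of the Gaussian-type tail
  have G_ind : ∀ t : ℝ, (∫ x in Set.Ici t, K x) =
      ∫ y in Set.Icc (-1:ℝ) 1, (Set.Ici t).indicator K y := by
    intro t
    have h1 : ∫ y in Set.Icc (-1:ℝ) 1, (Set.Ici t).indicator K y
        = ∫ y, (Set.Ici t).indicator K y :=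
      setIntegral_eq_integral_of_forall_compl_eq_zero (fun y hy => by
        by_cases hyt : y ∈ Set.Ici t
        · rw [Set.indicator_of_mem hyt, hKsupp' y hy]
        · rw [Set.indicator_of_notMem hyt])
    rw [h1, integral_indicator measurableSet_Ici]
  -- derivative bound for binv'
  have hb'neg : ∀ x ∈ Set.Icc l r, b' x < 0 := fun x hx =>
    lt_of_le_of_lt (hb'le x hx) (by linarith)
  have hbinv'bound : ∀ v ∈ Set.Icc (b r) (b l), |binv' v| ≤ 1 / mb := by
    intro v hv
    obtain ⟨hmem, hbv⟩ := hbinvmem v hv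
    have h1 : HasDerivAt (b ∘ binv) (b' (binv v) * binv' v) v :=
      (hbd (binv v) hmem).comp v (hbinvd v hv)
    have h2 : HasDerivWithinAt (id : ℝ → ℝ) (b' (binv v) * binv' v)
        (Set.Icc (b r) (b l)) v :=
      (h1.hasDerivWithinAt).congr (fun u hu => ((hbinvmem u hu).2).symm) hbv.symm
    have h3 : derivWithin (id : ℝ → ℝ) (Set.Icc (b r) (b l)) v = b' (binv v) * binv' v :=
      h2.derivWithin ((uniqueDiffOn_Icc hbrl) v hv)
    have h4 : derivWithin (id : ℝ → ℝ) (Set.Icc (b r) (b l)) v = 1 :=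
      ((hasDerivAt_id v).hasDerivWithinAt).derivWithin ((uniqueDiffOn_Icc hbrl) v hv)
    have h5 : b' (binv v) * binv' v = 1 := by rw [← h3, h4]
    have h6 : b' (binv v) < 0 := hb'neg _ hmem
    have h7 : mb ≤ |b' (binv v)| := by
      rw [abs_of_neg h6]; linarith [hb'le _ hmem]
    have h8 : |binv' v| * |b' (binv v)| = 1 := by rw [← abs_mul, mul_comm, h5, abs_one]
    have h9 : |binv' v| = 1 / |b' (binv v)| := eq_one_div_of_mul_eq_one_left h8
    rw [h9]
    exact one_div_le_one_div_of_le hmb h7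
  set M := ⨆ v ∈ Set.Icc (b r) (b l), |binv' v| with hM_def
  have hSle : ∀ v : ℝ, (⨆ _ : v ∈ Set.Icc (b r) (b l), |binv' v|) ≤ 1 / mb := by
    intro v
    by_cases hv : v ∈ Set.Icc (b r) (b l)
    · haveI : Nonempty (v ∈ Set.Icc (b r) (b l)) := ⟨hv⟩
      rw [ciSup_const]
      exact hbinv'bound v hv
    · haveI : IsEmpty (v ∈ Set.Icc (b r) (b l)) := ⟨hv⟩
      rw [Real.iSup_of_isEmpty]
      positivity
  have hbdd : BddAbove (Set.range fun v => ⨆ _ : v ∈ Set.Icc (b r) (b l), |binv' v|) :=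
    ⟨1 / mb, by rintro x ⟨v, rfl⟩; exact hSle v⟩
  have hMle : M ≤ 1 / mb := ciSup_le hSle
  have hMb : ∀ v ∈ Set.Icc (b r) (b l), |binv' v| ≤ M := by
    intro v hv
    haveI : Nonempty (v ∈ Set.Icc (b r) (b l)) := ⟨hv⟩
    have := le_ciSup hbdd v
    rwa [ciSup_const] at this
  have hM0 : 0 ≤ M := le_trans (abs_nonneg _) (hMb (b l) ⟨hbrl.le, le_rfl⟩)
  -- the main estimate
  have main : ∀ w ∈ Set.Icc (b (r₀ + ε)) (b (l₀ - ε)),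
      |binvApprox K l₀ r₀ ε h b w - binv w| ≤ h * M * ∫ y, |y| * K y := by
    intro w hw
    have hlε : l < l₀ - ε := by rw [hl_def]; linarith
    have hrε : r₀ + ε < r := by rw [hr_def]; linarith
    have hlεmem : l₀ - ε ∈ Set.Icc l r := ⟨hlε.le, by rw [hr_def]; linarith⟩
    have hrεmem : r₀ + ε ∈ Set.Icc l r := ⟨by rw [hl_def]; linarith, hrε.le⟩
    have hblε : b (l₀ - ε) < b l := hanti ⟨le_rfl, hlr2.le⟩ hlεmem hlε
    have hbrε : b r < b (r₀ + ε) := hanti hrεmem ⟨hlr2.le, le_rfl⟩ hrε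
    have hhl : h < b l - b (l₀ - ε) := (lt_min_iff.1 hh).1
    have hhr : h < b (r₀ + ε) - b r := (lt_min_iff.1 hh).2
    obtain ⟨hw1, hw2⟩ := hw
    have hwJ : ∀ y ∈ Set.Icc (-1:ℝ) 1, w - h * y ∈ Set.Icc (b r) (b l) := by
      intro y hy
      obtain ⟨hy1, hy2⟩ := hy
      constructor
      · have h1 : h * y ≤ h := by nlinarith
        linarith
      · have h1 : -h ≤ h * y := by nlinarith
        linarith
    have hwJ0 : w ∈ Set.Icc (b r) (b l) := ⟨by linarith, by linarith⟩
    -- rewrite the inner integral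
    have h_inner : ∀ z : ℝ, (∫ y in Set.Iic (-w), Kh K h (-(b z) - y))
        = ∫ y in Set.Icc (-1:ℝ) 1, (if w - b z ≤ h * y then K y else 0) := by
      intro z
      rw [inner_eq z w, G_ind]
      apply setIntegral_congr_fun measurableSet_Icc
      intro y _
      have hiff : ((w - b z) / h ≤ y) = (w - b z ≤ h * y) := by
        rw [eq_iff_iff, div_le_iff₀ hh0, mul_comm]
      simp only [Set.indicator_apply, Set.mem_Ici, hiff]
    have hba : binvApprox K l₀ r₀ ε h b w = l + ∫ z in Set.Icc l r,
        ∫ y in Set.Icc (-1:ℝ) 1, (if w - b z ≤ h * y then K y else 0) := by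
      unfold binvApprox
      rw [← hl_def, ← hr_def]
      congr 1
      exact setIntegral_congr_fun hs (fun z _ => h_inner z)
    -- Fubini
    obtain ⟨CK, hCK⟩ := hKcont.bounded_above_of_compact_support hKcs
    have hCK' : ∀ x, K x ≤ CK := fun x => le_trans (le_abs_self _) ((Real.norm_eq_abs (K x)) ▸ hCK x)
    have hCK0 : 0 ≤ CK := le_trans (hK0 0) (hCK' 0)
    have hboxmeas : MeasurableSet ((Set.Icc l r ×ˢ Set.Icc (-1:ℝ) 1) ∩
        ((fun p : ℝ × ℝ => b p.1 + h * p.2 - w) ⁻¹' Set.Ici 0)) := by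
      apply IsClosed.measurableSet
      apply ContinuousOn.preimage_isClosed_of_isClosed ?_
        (isClosed_Icc.prod isClosed_Icc) isClosed_Ici
      exact ((hbcont.comp continuous_fst.continuousOn (fun p hp => hp.1)).add
        ((continuous_const.mul continuous_snd).continuousOn)).sub continuousOn_const
    have hfun_eq : Set.EqOn (Function.uncurry fun z y => if w - b z ≤ h * y then K y else 0)
        (((Set.Icc l r ×ˢ Set.Icc (-1:ℝ) 1) ∩
          ((fun p : ℝ × ℝ => b p.1 + h * p.2 - w) ⁻¹' Set.Ici 0)).indicator
          (fun p : ℝ × ℝ => K p.2)) (Set.Icc l r ×ˢ Set.Icc (-1:ℝ) 1) := by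
      intro p hp
      simp only [Function.uncurry, Set.indicator_apply, Set.mem_inter_iff, Set.mem_preimage,
        Set.mem_Ici]
      by_cases hc : w - b p.1 ≤ h * p.2
      · rw [if_pos hc, if_pos ⟨hp, by linarith⟩]
      · rw [if_neg hc, if_neg]
        rintro ⟨-, hge⟩
        exact hc (by linarith)
    have hswap : (∫ z in Set.Icc l r, ∫ y in Set.Icc (-1:ℝ) 1,
          (if w - b z ≤ h * y then K y else 0))
        = ∫ y in Set.Icc (-1:ℝ) 1, ∫ z in Set.Icc l r,
          (if w - b z ≤ h * y then K y else 0) := by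
      apply integral_integral_swap
      rw [Measure.prod_restrict]
      have hboxfin : (volume.prod volume) (Set.Icc l r ×ˢ Set.Icc (-1:ℝ) 1) < ⊤ := by
        rw [Measure.prod_prod, Real.volume_Icc, Real.volume_Icc]
        exact ENNReal.mul_lt_top ENNReal.ofReal_lt_top ENNReal.ofReal_lt_top
      apply Integrable.mono' (g := fun _ : ℝ × ℝ => CK)
      · exact integrableOn_const hboxfin.ne
      · apply AEStronglyMeasurable.congr
          (((hKcont.comp continuous_snd).stronglyMeasurable.indicator
            hboxmeas).aestronglyMeasurable)
        filter_upwards [ae_restrict_mem ((measurableSet_Icc.prod measurableSet_Icc))] with p hp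
        exact (hfun_eq hp).symm
      · apply Filter.Eventually.of_forall
        intro p
        simp only [Function.uncurry, Real.norm_eq_abs]
        by_cases hc : w - b p.1 ≤ h * p.2
        · rw [if_pos hc, abs_of_nonneg (hK0 _)]; exact hCK' _
        · rw [if_neg hc, abs_zero]; exact hCK0
    -- inner integral after swapping
    have hinner2 : ∀ y ∈ Set.Icc (-1:ℝ) 1,
        (∫ z in Set.Icc l r, (if w - b z ≤ h * y then K y else 0))
          = K y * (binv (w - h * y) - l) := by
      intro y hy
      have hc : w - h * y ∈ Set.Icc (b r) (b l) := hwJ y hy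
      obtain ⟨hm, hbm⟩ := hbinvmem _ hc
      have hcond : ∀ z ∈ Set.Icc l r, (w - b z ≤ h * y ↔ z ≤ binv (w - h * y)) := by
        intro z hz
        constructor
        · intro hle
          by_contra hgt
          push_neg at hgt
          have := hanti hm hz hgt
          rw [hbm] at this
          linarith
        · intro hle
          rcases eq_or_lt_of_le hle with he | hlt
          · have : b z = w - h * y := by rw [he, hbm]
            linarith
          · have := hanti hz hm hlt
            rw [hbm] at this
            linarith
      have heqon : Set.EqOn (fun z => if w - b z ≤ h * y then K y else 0)
          ((Set.Icc l (binv (w - h * y))).indicator (fun _ => K y)) (Set.Icc l r) := by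
        intro z hz
        simp only [Set.indicator_apply, Set.mem_Icc]
        by_cases hcz : w - b z ≤ h * y
        · rw [if_pos hcz, if_pos ⟨hz.1, (hcond z hz).1 hcz⟩]
        · rw [if_neg hcz, if_neg (fun hmem => hcz ((hcond z hz).2 hmem.2))]
      rw [setIntegral_congr_fun hs heqon, setIntegral_indicator measurableSet_Icc]
      have hss : Set.Icc l r ∩ Set.Icc l (binv (w - h * y)) = Set.Icc l (binv (w - h * y)) :=
        Set.inter_eq_self_of_subset_right (Set.Icc_subset_Icc le_rfl hm.2)
      rw [hss, setIntegral_const, measureReal_def, Real.volume_Icc,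
        ENNReal.toReal_ofReal (by linarith [hm.1]), smul_eq_mul, mul_comm]
    have hba2 : binvApprox K l₀ r₀ ε h b w
        = l + ∫ y in Set.Icc (-1:ℝ) 1, K y * (binv (w - h * y) - l) := by
      rw [hba, hswap]
      congr 1
      exact setIntegral_congr_fun measurableSet_Icc hinner2
    -- split the integral
    have hbinvcont : ContinuousOn binv (Set.Icc (b r) (b l)) := fun v hv =>
      (hbinvd v hv).continuousAt.continuousWithinAt
    have hcomp : ContinuousOn (fun y : ℝ => binv (w - h * y)) (Set.Icc (-1:ℝ) 1) :=
      hbinvcont.comp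
        ((continuous_const.sub (continuous_const.mul continuous_id)).continuousOn) hwJ
    have hint1 : IntegrableOn (fun y : ℝ => K y * (binv (w - h * y) - binv w))
        (Set.Icc (-1:ℝ) 1) :=
      (hKcont.continuousOn.mul (hcomp.sub continuousOn_const)).integrableOn_compact
        isCompact_Icc
    have hint2 : IntegrableOn (fun y : ℝ => K y * (binv w - l)) (Set.Icc (-1:ℝ) 1) :=
      hKi.integrableOn.mul_const _
    have hsplit : (∫ y in Set.Icc (-1:ℝ) 1, K y * (binv (w - h * y) - l))
        = (∫ y in Set.Icc (-1:ℝ) 1, K y * (binv (w - h * y) - binv w)) + (binv w - l) := by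
      have hpt : ∀ y : ℝ, K y * (binv (w - h * y) - l)
          = K y * (binv (w - h * y) - binv w) + K y * (binv w - l) := fun y => by ring
      simp_rw [hpt]
      rw [integral_add hint1 hint2, integral_mul_const, hIccK, one_mul]
    have hdiff : binvApprox K l₀ r₀ ε h b w - binv w
        = ∫ y in Set.Icc (-1:ℝ) 1, K y * (binv (w - h * y) - binv w) := by
      rw [hba2, hsplit]; ring
    rw [hdiff]
    -- MVT bound
    have hmvt : ∀ y ∈ Set.Icc (-1:ℝ) 1, |binv (w - h * y) - binv w| ≤ M * (h * |y|) := by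
      intro y hy
      have hb1 := (convex_Icc (b r) (b l)).norm_image_sub_le_of_norm_hasDerivWithin_le
        (fun v hv => (hbinvd v hv).hasDerivWithinAt)
        (fun v hv => by rw [Real.norm_eq_abs]; exact hMb v hv)
        hwJ0 (hwJ y hy)
      rw [Real.norm_eq_abs, Real.norm_eq_abs] at hb1
      calc |binv (w - h * y) - binv w| ≤ M * |w - h * y - w| := hb1
        _ = M * (h * |y|) := by
            rw [show w - h * y - w = -(h * y) by ring, abs_neg, abs_mul, abs_of_pos hh0]
    calc |∫ y in Set.Icc (-1:ℝ) 1, K y * (binv (w - h * y) - binv w)|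
        ≤ ∫ y in Set.Icc (-1:ℝ) 1, |K y * (binv (w - h * y) - binv w)| := by
          simpa only [Real.norm_eq_abs] using
            norm_integral_le_integral_norm (fun y => K y * (binv (w - h * y) - binv w))
      _ ≤ ∫ y in Set.Icc (-1:ℝ) 1, (h * M) * (|y| * K y) := by
          apply setIntegral_mono_on hint1.abs
            ((hyKi.integrableOn).const_mul _) measurableSet_Icc
          intro y hy
          rw [abs_mul, abs_of_nonneg (hK0 y)]
          calc K y * |binv (w - h * y) - binv w| ≤ K y * (M * (h * |y|)) :=
              mul_le_mul_of_nonneg_left (hmvt y hy) (hK0 y)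
            _ = (h * M) * (|y| * K y) := by ring
      _ = (h * M) * ∫ y in Set.Icc (-1:ℝ) 1, |y| * K y := integral_const_mul _ _
      _ = h * M * ∫ y, |y| * K y := by rw [hyKint]
  refine ⟨main, fun w hw => le_trans (main w hw) ?_⟩
  calc h * M * ∫ y, |y| * K y ≤ h * (1 / mb) * ∫ y, |y| * K y := by
        apply mul_le_mul_of_nonneg_right (mul_le_mul_of_nonneg_left hMle hh0.le) hInn
    _ = (h / mb) * ∫ y, |y| * K y := by ring
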